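/- For z = θ + iφ with θ, φ ∈ ℝ, one has the factorization cos z + sin z·I = (cosh φ + i sinh φ·I)·(cos θ + sin θ·I) in ℍ^ℂ, and consequently S¹_ℂ = {cos z + sin z·I : z ∈ ℂ} equals the set of products Spin(1,1)·Spin(2), where Spin(1,1) = {±(cosh φ + i sinh φ·I) : φ ∈ ℝ} and Spin(2) = {cos θ + sin θ·I : θ ∈ ℝ}. -/

import Mathlib

noncomputable section

/-- The algebra of complex quaternions `ℍ^ℂ`. -/
abbrev HC := Quaternion ℂ

def qI : HC := ⟨0, 1, 0, 0⟩
def qJ : HC := ⟨0, 0, 1, 0⟩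
def qK : HC := ⟨0, 0, 0, 1⟩

/-- The complex bilinear form `H(ξ,ξ') = q₀q₀' + q₁q₁' + q₂q₂' + q₃q₃'`. -/
def Hform (x y : HC) : ℂ :=
  x.re * y.re + x.imI * y.imI + x.imJ * y.imJ + x.imK * y.imK

/-- Coefficientwise complex conjugation `ξ̂`.  (The quaternionic conjugate
`ξ̄` is `star ξ`.) -/
def qhat (x : HC) : HC :=
  ⟨(starRingEnd ℂ) x.re, (starRingEnd ℂ) x.imI, (starRingEnd ℂ) x.imJ, (starRingEnd ℂ) x.imK⟩

/-- Membership in the Minkowski space `V = {ix₀1 + x₁I + x₂J + x₃K : xᵢ ∈ ℝ} ⊂ ℍ^ℂ`. -/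
def inV (ξ : HC) : Prop :=
  ∃ x₀ x₁ x₂ x₃ : ℝ,
    ξ = (Complex.I * (x₀ : ℂ)) • (1 : HC) + (x₁ : ℂ) • qI + (x₂ : ℂ) • qJ + (x₃ : ℂ) • qK


private lemma key7 (θ φ : ℝ) :
    Complex.cos ((θ : ℂ) + (φ : ℂ) * Complex.I) • (1 : HC)
        + Complex.sin ((θ : ℂ) + (φ : ℂ) * Complex.I) • qI
      = (((Real.cosh φ : ℂ)) • (1 : HC) + (Complex.I * (Real.sinh φ : ℂ)) • qI)
        * (((Real.cos θ : ℂ)) • (1 : HC) + ((Real.sin θ : ℂ)) • qI) := by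
  have hc : Complex.cos ((θ:ℂ) + φ*Complex.I)
      = Real.cos θ * Real.cosh φ - Real.sin θ * (Complex.I * Real.sinh φ) := by
    rw [Complex.cos_add, Complex.cos_mul_I, Complex.sin_mul_I]
    push_cast [← Complex.ofReal_cos, ← Complex.ofReal_sin, ← Complex.ofReal_cosh,
      ← Complex.ofReal_sinh]
    ring
  have hs : Complex.sin ((θ:ℂ) + φ*Complex.I)
      = Real.sin θ * Real.cosh φ + Real.cos θ * (Complex.I * Real.sinh φ) := by
    rw [Complex.sin_add, Complex.cos_mul_I, Complex.sin_mul_I]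
    push_cast [← Complex.ofReal_cos, ← Complex.ofReal_sin, ← Complex.ofReal_cosh,
      ← Complex.ofReal_sinh]
    ring
  rw [hc, hs]
  ext <;> simp [Quaternion.ext_iff, Quaternion.re_one, Quaternion.imI_one, Quaternion.imJ_one, Quaternion.imK_one, Quaternion.re_smul, Quaternion.imI_smul, Quaternion.imJ_smul, Quaternion.imK_smul] <;> simp [qI] <;> ring

/-- For `z = θ + iφ`: `cos z + sin z·I = (cosh φ + i sinh φ·I)(cos θ + sin θ·I)`,
and consequently `S¹_ℂ = Spin(1,1)·Spin(2)`. -/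
theorem stmt7 :
    (∀ θ φ : ℝ,
      Complex.cos ((θ : ℂ) + (φ : ℂ) * Complex.I) • (1 : HC)
          + Complex.sin ((θ : ℂ) + (φ : ℂ) * Complex.I) • qI
        = (((Real.cosh φ : ℂ)) • (1 : HC) + (Complex.I * (Real.sinh φ : ℂ)) • qI)
          * (((Real.cos θ : ℂ)) • (1 : HC) + ((Real.sin θ : ℂ)) • qI)) ∧
    {q : HC | ∃ z : ℂ, q = Complex.cos z • (1 : HC) + Complex.sin z • qI} =
      {q : HC | ∃ a b : HC,
        (∃ φ : ℝ,
          a = (Real.cosh φ : ℂ) • (1 : HC) + (Complex.I * (Real.sinh φ : ℂ)) • qI ∨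
          a = -((Real.cosh φ : ℂ) • (1 : HC) + (Complex.I * (Real.sinh φ : ℂ)) • qI)) ∧
        (∃ θ : ℝ, b = (Real.cos θ : ℂ) • (1 : HC) + (Real.sin θ : ℂ) • qI) ∧
        q = a * b} := by
  refine ⟨key7, ?_⟩
  ext q
  simp only [Set.mem_setOf_eq]
  constructor
  · rintro ⟨z, rfl⟩
    refine ⟨_, _, ⟨z.im, Or.inl rfl⟩, ⟨z.re, rfl⟩, ?_⟩
    rw [← key7 z.re z.im, Complex.re_add_im]
  · rintro ⟨a, b, ⟨φ, ha | ha⟩, ⟨θ, rfl⟩, rfl⟩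
    · exact ⟨(θ:ℂ) + φ*Complex.I, by rw [key7, ha]⟩
    · refine ⟨(θ:ℂ) + φ*Complex.I + Real.pi, ?_⟩
      have hneg : ∀ x y : HC, -x * y = -(x * y) := fun x y => neg_mul x y
      rw [ha, Complex.cos_add_pi, Complex.sin_add_pi, hneg, ← key7, neg_add]
      module
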